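/- Let H be a complex Hilbert space, h₁,…,h_K ∈ H, and S = span{h₁,…,h_K}. Suppose (v₁,…,v_K) ∈ H^K satisfies the power constraint Σ_k ‖v_k‖² = P for some P > 0, and that for some index k₀ the vector v_{k₀} ∉ S. Assume further that ⟪h_j, (v_j projected onto S)⟫ ≠ 0 for at least one j. Then there exists (w₁,…,w_K) ∈ H^K with Σ_k ‖w_k‖² = P such that Σ_j log₂(1 + A_j|⟪h_j, w_j⟫|² / (Σ_{i≠j} A_i|⟪h_j, w_i⟫|² + σ_j²)) > Σ_j log₂(1 + A_j|⟪h_j, v_j⟫|² / (Σ_{i≠j} A_i|⟪h_j, v_i⟫|² + σ_j²)), where A_j > 0 and σ_j² > 0 are fixed constants. -/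

import Mathlib

open scoped InnerProductSpace
open Finset

/-- Proposition 1 (abstract Hilbert-space form): a feasible tuple of current
distributions with a component outside the channel subspace is strictly
suboptimal for sum spectral efficiency under the total power constraint.
The vector `p k` is the orthogonal projection of `v k` onto the channel
subspace `S = span {h 1, …, h K}`, characterized by the decomposition
`v k = p k + q k`, `p k ∈ S`, `q k ∈ Sᗮ`. -/
theorem stmt_4 {H : Type*} [NormedAddCommGroup H] [InnerProductSpace ℂ H]
    {K : ℕ} (h : Fin K → H) (v p q : Fin K → H)
    (A σsq : Fin K → ℝ) (hA : ∀ j, 0 < A j) (hσ : ∀ j, 0 < σsq j)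
    (P : ℝ) (hP : 0 < P)
    (hpow : ∑ k, ‖v k‖ ^ 2 = P)
    (hdecomp : ∀ k, v k = p k + q k)
    (hp : ∀ k, p k ∈ Submodule.span ℂ (Set.range h))
    (hq : ∀ k, q k ∈ (Submodule.span ℂ (Set.range h))ᗮ)
    (k₀ : Fin K) (hk₀ : v k₀ ∉ Submodule.span ℂ (Set.range h))
    (hsig : ∃ j, ⟪h j, p j⟫_ℂ ≠ 0) :
    ∃ w : Fin K → H, ∑ k, ‖w k‖ ^ 2 = P ∧
      (∑ j, Real.logb 2 (1 + A j * ‖⟪h j, w j⟫_ℂ‖ ^ 2 /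
        (∑ i ∈ Finset.univ.erase j, A i * ‖⟪h j, w i⟫_ℂ‖ ^ 2 + σsq j))) >
      (∑ j, Real.logb 2 (1 + A j * ‖⟪h j, v j⟫_ℂ‖ ^ 2 /
        (∑ i ∈ Finset.univ.erase j, A i * ‖⟪h j, v i⟫_ℂ‖ ^ 2 + σsq j))) := by
  classical
  have hq0 : ∀ j i, ⟪h j, q i⟫_ℂ = 0 := fun j i =>
    (Submodule.mem_orthogonal _ _).1 (hq i) (h j) (Submodule.subset_span ⟨j, rfl⟩)
  have hvp : ∀ j i, ⟪h j, v i⟫_ℂ = ⟪h j, p i⟫_ℂ := by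
    intro j i
    rw [hdecomp i, inner_add_right, hq0 j i, add_zero]
  have hpyth : ∀ k, ‖v k‖ ^ 2 = ‖p k‖ ^ 2 + ‖q k‖ ^ 2 := by
    intro k
    rw [hdecomp k]
    have := norm_add_sq_eq_norm_sq_add_norm_sq_of_inner_eq_zero (p k) (q k)
      ((Submodule.mem_orthogonal _ _).1 (hq k) (p k) (hp k))
    simp only [pow_two]; exact this
  set T : ℝ := ∑ k, ‖p k‖ ^ 2 with hT
  obtain ⟨j₀, hj₀⟩ := hsig
  have hT0 : 0 < T := by
    have hpj : (0:ℝ) < ‖p j₀‖ ^ 2 := by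
      have hne : p j₀ ≠ 0 := by
        intro h0; apply hj₀; rw [h0, inner_zero_right]
      exact pow_pos (norm_pos_iff.2 hne) 2
    refine lt_of_lt_of_le hpj ?_
    exact Finset.single_le_sum (f := fun k => ‖p k‖ ^ 2)
      (fun k _ => by positivity) (Finset.mem_univ j₀)
  have hqk0 : q k₀ ≠ 0 := by
    intro h0
    apply hk₀
    rw [hdecomp k₀, h0, add_zero]; exact hp k₀
  have hTP : T < P := by
    rw [← hpow]
    refine Finset.sum_lt_sum (fun k _ => ?_) ⟨k₀, Finset.mem_univ k₀, ?_⟩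
    · rw [hpyth k]; nlinarith [sq_nonneg ‖q k‖]
    · rw [hpyth k₀]
      have : (0:ℝ) < ‖q k₀‖ ^ 2 := pow_pos (norm_pos_iff.2 hqk0) 2
      linarith
  set c2 : ℝ := P / T with hc2def
  have hc2 : 1 < c2 := (one_lt_div hT0).2 hTP
  have hc2pos : 0 < c2 := by linarith
  set c : ℝ := Real.sqrt c2 with hcdef
  refine ⟨fun k => (c : ℂ) • p k, ?_, ?_⟩
  · have : ∀ k, ‖(c : ℂ) • p k‖ ^ 2 = c2 * ‖p k‖ ^ 2 := by
      intro k
      rw [norm_smul, Complex.norm_real, Real.norm_eq_abs,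
        abs_of_nonneg (Real.sqrt_nonneg _), mul_pow, Real.sq_sqrt hc2pos.le]
    simp only [this, ← Finset.mul_sum, ← hT, hc2def]
    field_simp
  · have hinner : ∀ j i, ‖⟪h j, (c : ℂ) • p i⟫_ℂ‖ ^ 2 =
        c2 * ‖⟪h j, v i⟫_ℂ‖ ^ 2 := by
      intro j i
      rw [inner_smul_right, norm_mul, Complex.norm_real, Real.norm_eq_abs,
        abs_of_nonneg (Real.sqrt_nonneg _), mul_pow, Real.sq_sqrt hc2pos.le, hvp]
    refine Finset.sum_lt_sum (fun j _ => ?_) ⟨j₀, Finset.mem_univ j₀, ?_⟩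
    · set a : ℝ := ‖⟪h j, v j⟫_ℂ‖ ^ 2 with ha
      set I : ℝ := ∑ i ∈ Finset.univ.erase j, A i * ‖⟪h j, v i⟫_ℂ‖ ^ 2 with hI
      have hIw : ∑ i ∈ Finset.univ.erase j, A i * ‖⟪h j, (c : ℂ) • p i⟫_ℂ‖ ^ 2
          = c2 * I := by
        rw [hI, Finset.mul_sum]
        exact Finset.sum_congr rfl fun i _ => by rw [hinner]; ring
      rw [hinner, hIw]
      have hInn : 0 ≤ I := Finset.sum_nonneg fun i _ =>
        mul_nonneg (hA i).le (by positivity)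
      have ha0 : 0 ≤ a := by positivity
      have hd1 : 0 < I + σsq j := by linarith [hσ j]
      have hd2 : 0 < c2 * I + σsq j := by nlinarith [hσ j]
      have harg : 0 < 1 + A j * a / (I + σsq j) := by
        have : 0 ≤ A j * a / (I + σsq j) :=
          div_nonneg (mul_nonneg (hA j).le ha0) hd1.le
        linarith
      refine Real.logb_le_logb_of_le one_lt_two harg ?_
      have : A j * a / (I + σsq j) ≤ A j * (c2 * a) / (c2 * I + σsq j) := by
        rw [div_le_div_iff₀ hd1 hd2]
        nlinarith [mul_nonneg (mul_nonneg (mul_nonneg (sub_nonneg.2 hc2.le) (hA j).le) ha0) (hσ j).le]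
      linarith
    · set a : ℝ := ‖⟪h j₀, v j₀⟫_ℂ‖ ^ 2 with ha
      set I : ℝ := ∑ i ∈ Finset.univ.erase j₀, A i * ‖⟪h j₀, v i⟫_ℂ‖ ^ 2 with hI
      have hIw : ∑ i ∈ Finset.univ.erase j₀, A i * ‖⟪h j₀, (c : ℂ) • p i⟫_ℂ‖ ^ 2
          = c2 * I := by
        rw [hI, Finset.mul_sum]
        exact Finset.sum_congr rfl fun i _ => by rw [hinner]; ring
      rw [hinner, hIw]
      have hInn : 0 ≤ I := Finset.sum_nonneg fun i _ =>
        mul_nonneg (hA i).le (by positivity)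
      have ha0 : 0 < a := by
        have hne : ⟪h j₀, v j₀⟫_ℂ ≠ 0 := by rw [hvp]; exact hj₀
        exact pow_pos (norm_pos_iff.2 hne) 2
      have hd1 : 0 < I + σsq j₀ := by linarith [hσ j₀]
      have hd2 : 0 < c2 * I + σsq j₀ := by nlinarith [hσ j₀]
      have harg : 0 < 1 + A j₀ * a / (I + σsq j₀) := by
        have : 0 ≤ A j₀ * a / (I + σsq j₀) :=
          div_nonneg (mul_nonneg (hA j₀).le ha0.le) hd1.le
        linarith
      refine Real.logb_lt_logb one_lt_two harg ?_
      have : A j₀ * a / (I + σsq j₀) < A j₀ * (c2 * a) / (c2 * I + σsq j₀) := by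
        rw [div_lt_div_iff₀ hd1 hd2]
        nlinarith [mul_pos (mul_pos (mul_pos (sub_pos.2 hc2) (hA j₀)) ha0) (hσ j₀)]
      linarith
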